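/- arXiv:quant-ph/0412071 — 2 statements merged into one kernel-verified Lean document; each statement's English description precedes it below -/
import Mathlib

section
/- For every finite simple graph G = (V, E) with nonempty vertex set, δ_loc(G) = |V| − 1 − max over nonempty subsets K ⊆ V of |{ v ∈ V \ K : |N_G(v) ∩ K| ≡ 0 (mod 2) }|. -/
open SimpleGraph

variable {V : Type*}

/-- Local complementation of `G` at the vertex `v`: adjacency among the
neighbors of `v` is complemented, i.e. the edge set is `E Δ K_v`. -/
def localComp (G : SimpleGraph V) (v : V) : SimpleGraph V where
  Adj u w := u ≠ w ∧ ¬ (G.Adj u w ↔ (G.Adj v u ∧ G.Adj v w))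
  symm := by
    constructor
    intro u w h
    refine ⟨h.1.symm, ?_⟩
    have h1 := G.adj_comm u w
    have h2 := h.2
    tauto
  loopless := by
    constructor
    intro u h
    exact h.1 rfl

/-- The minimal vertex degree `δ(G)` of a graph. -/
noncomputable def minDegree (G : SimpleGraph V) : ℕ :=
  sInf (Set.range fun v => (G.neighborSet v).ncard)

/-- The minimal degree under local complementation `δ_loc(G)`: the minimum of
`δ(G')` over all graphs `G'` obtainable from `G` by a finite sequence of
local complementations. -/
noncomputable def minDegreeLoc (G : SimpleGraph V) : ℕ :=
  sInf {n | ∃ l : List V, minDegree (l.foldl localComp G) = n}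

/-- `D` is an evenly seen set if every vertex outside `D` has an even number
of neighbors in `D`. -/
def EvenlySeen (G : SimpleGraph V) (D : Set V) : Prop :=
  ∀ u ∉ D, Even ((G.neighborSet u ∩ D).ncard)

/-- A nonempty set `K` is `d`-locally evenly seen if there is a set `D` with
`K ⊆ D ⊆ V` and `|D| = d` such that every vertex outside `D` has an even
number of neighbors in `K`. -/
def LocallyEvenlySeen (G : SimpleGraph V) (d : ℕ) (K : Set V) : Prop :=
  K.Nonempty ∧ ∃ D : Set V, K ⊆ D ∧ D.ncard = d ∧
    ∀ u ∉ D, Even ((G.neighborSet u ∩ K).ncard)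


lemma localComp_involutive (G : SimpleGraph V) (v : V) :
    localComp (localComp G v) v = G := by
  ext u w
  by_cases huw : u = w
  · subst huw; simp [localComp]
  · simp only [localComp, huw, ne_eq, not_false_iff, true_and]
    by_cases h2 : G.Adj u w <;> by_cases h3 : G.Adj v u <;> by_cases h4 : G.Adj v w <;>
      simp_all [G.ne_of_adj, SimpleGraph.irrefl] <;> tauto

open scoped Classical

noncomputable def par (G : SimpleGraph V) (K : Finset V) (u : V) : ZMod 2 :=
  ∑ w ∈ K, if G.Adj u w then 1 else 0

noncomputable def locS [Fintype V] (G : SimpleGraph V) (K : Finset V) : Finset V :=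
  K ∪ Finset.univ.filter (fun u => par G K u = 1)

lemma par_localComp (G : SimpleGraph V) (v : V) (K : Finset V) (u : V) :
    par (localComp G v) K u =
      par G K u + (if G.Adj v u then 1 else 0) *
        (par G K v + if u ∈ K then 1 else 0) := by
  have hterm : ∀ w, (if (localComp G v).Adj u w then (1:ZMod 2) else 0) =
      (if G.Adj u w then 1 else 0) +
        ((if G.Adj v u then (1:ZMod 2) else 0) * (if G.Adj v w then 1 else 0)
          - if u = w then (if G.Adj v u then (1:ZMod 2) else 0) else 0) := by
    intro w
    by_cases h1 : u = w
    · subst h1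
      by_cases h3 : G.Adj v u <;> simp [localComp, h3]
    · by_cases h2 : G.Adj u w <;> by_cases h3 : G.Adj v u <;> by_cases h4 : G.Adj v w <;>
        simp [localComp, h1, h2, h3, h4] <;> decide
  calc par (localComp G v) K u
      = ∑ w ∈ K, ((if G.Adj u w then (1:ZMod 2) else 0) +
        ((if G.Adj v u then (1:ZMod 2) else 0) * (if G.Adj v w then 1 else 0)
          - if u = w then (if G.Adj v u then (1:ZMod 2) else 0) else 0)) :=
        Finset.sum_congr rfl (fun w _ => hterm w)
    _ = par G K u + ((if G.Adj v u then (1:ZMod 2) else 0) * par G K v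
          - if u ∈ K then (if G.Adj v u then (1:ZMod 2) else 0) else 0) := by
        rw [Finset.sum_add_distrib, Finset.sum_sub_distrib, ← Finset.mul_sum,
          Finset.sum_ite_eq]
        rfl
    _ = par G K u + (if G.Adj v u then 1 else 0) *
        (par G K v + if u ∈ K then 1 else 0) := by
        by_cases hu : u ∈ K <;> simp [hu, mul_add, CharTwo.sub_eq_add]

lemma zmod2_ne_one {x : ZMod 2} : x ≠ 1 ↔ x = 0 := by revert x; decide

lemma par_erase (G : SimpleGraph V) (K : Finset V) {w : V} (hw : w ∈ K) (u : V) :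
    par G (K.erase w) u = par G K u + (if G.Adj u w then 1 else 0) := by
  have h := Finset.add_sum_erase K (fun x => if G.Adj u x then (1:ZMod 2) else 0) hw
  unfold par
  rw [← h]
  rw [add_comm (if G.Adj u w then (1:ZMod 2) else 0), add_assoc,
    CharTwo.add_self_eq_zero, add_zero]

lemma par_insert (G : SimpleGraph V) (K : Finset V) {v : V} (hv : v ∉ K) (u : V) :
    par G (insert v K) u = par G K u + (if G.Adj u v then 1 else 0) := by
  unfold par
  rw [Finset.sum_insert hv, add_comm]

lemma mem_locS [Fintype V] {G : SimpleGraph V} {K : Finset V} {u : V} :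
    u ∈ locS G K ↔ u ∈ K ∨ par G K u = 1 := by
  simp [locS]

lemma not_mem_locS [Fintype V] {G : SimpleGraph V} {K : Finset V} {u : V} :
    u ∉ locS G K ↔ u ∉ K ∧ par G K u = 0 := by
  rw [mem_locS]
  push_neg
  rw [zmod2_ne_one]

lemma K_subset_locS [Fintype V] (G : SimpleGraph V) (K : Finset V) : K ⊆ locS G K :=
  Finset.subset_union_left

lemma par_self (G : SimpleGraph V) (v : V) : par G {v} v = 0 := by
  unfold par
  rw [Finset.sum_singleton, if_neg (G.irrefl)]

lemma par_comm_if (G : SimpleGraph V) (u w : V) :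
    (if G.Adj u w then (1:ZMod 2) else 0) = if G.Adj w u then 1 else 0 := by
  rw [G.adj_comm]

lemma zmod2_add_self (x : ZMod 2) : x + x = 0 := CharTwo.add_self_eq_zero x

/-- Shrink step: complementing at `w ∈ K ∩ Odd(K)` lets us drop `w` from `K`
without growing the locally-seen region. -/
lemma locS_shrink [Fintype V] {G : SimpleGraph V} {K : Finset V} {w : V}
    (hw : w ∈ K) (hp : par G K w = 1) :
    locS (localComp G w) (K.erase w) ⊆ locS G K := by
  intro u hu
  rcases mem_locS.1 hu with h | h
  · exact K_subset_locS G K (Finset.mem_of_mem_erase h)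
  · by_cases huK : u ∈ K
    · exact K_subset_locS G K huK
    · refine mem_locS.2 (Or.inr ?_)
      rw [par_localComp] at h
      rw [par_erase G K hw u, par_erase G K hw w, hp, if_neg (G.irrefl),
        add_zero] at h
      have hne : u ∉ K.erase w := fun hc => huK (Finset.mem_of_mem_erase hc)
      rw [if_neg hne, add_zero, mul_one, par_comm_if G u w] at h
      rw [← h, add_assoc, zmod2_add_self, add_zero]

/-- Complementing at a vertex seeing `K` evenly does not grow the
locally-seen region. -/
lemma locS_even [Fintype V] {G : SimpleGraph V} {K : Finset V} {w : V}
    (hp : par G K w = 0) :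
    locS (localComp G w) K ⊆ locS G K := by
  intro u hu
  rcases mem_locS.1 hu with h | h
  · exact K_subset_locS G K h
  · by_cases huK : u ∈ K
    · exact K_subset_locS G K huK
    · refine mem_locS.2 (Or.inr ?_)
      rw [par_localComp, hp, if_neg huK, add_zero, mul_zero, add_zero] at h
      exact h

lemma par_localComp_even [Fintype V] {G : SimpleGraph V} {K : Finset V} {w u : V}
    (hp : par G K w = 0) (huK : u ∈ K) (hadj : G.Adj w u) (hu : par G K u = 0) :
    par (localComp G w) K u = 1 := by
  rw [par_localComp, hp, hu, if_pos hadj, if_pos huK, zero_add, zero_add, one_mul]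

/-- Invariance construction: any locally-seen region of `localComp G v`
contains a locally-seen region of `G`. -/
lemma locS_invar [Fintype V] {G : SimpleGraph V} (v : V) {K : Finset V}
    (hK : K.Nonempty) :
    ∃ Y : Finset V, Y.Nonempty ∧ locS G Y ⊆ locS (localComp G v) K := by
  by_cases hp : par G K v = 1
  · by_cases hvK : v ∈ K
    · refine ⟨K.erase v, ?_, ?_⟩
      · rcases Finset.eq_empty_or_nonempty (K.erase v) with he | hne
        · exfalso
          have : K = {v} := by
            apply Finset.eq_singleton_iff_nonempty_unique_mem.2 ⟨hK, ?_⟩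
            intro x hx
            by_contra hxv
            exact (Finset.eq_empty_iff_forall_notMem.1 he x)
              (Finset.mem_erase.2 ⟨hxv, hx⟩)
          rw [this, par_self] at hp
          exact one_ne_zero hp.symm
        · exact hne
      · intro u hu
        rcases mem_locS.1 hu with h | h
        · exact K_subset_locS _ K (Finset.mem_of_mem_erase h)
        · by_cases huK : u ∈ K
          · exact K_subset_locS _ K huK
          · refine mem_locS.2 (Or.inr ?_)
            rw [par_erase G K hvK u] at h
            rw [par_localComp, hp, if_neg huK, add_zero, mul_one, par_comm_if G v u]
            exact h
    · refine ⟨insert v K, Finset.insert_nonempty v K, ?_⟩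
      intro u hu
      have hv' : v ∈ locS (localComp G v) K := by
        refine mem_locS.2 (Or.inr ?_)
        rw [par_localComp, hp, if_neg (G.irrefl), zero_mul, add_zero]
      rcases mem_locS.1 hu with h | h
      · rcases Finset.mem_insert.1 h with rfl | h
        · exact hv'
        · exact K_subset_locS _ K h
      · by_cases huv : u = v
        · exact huv ▸ hv'
        · by_cases huK : u ∈ K
          · exact K_subset_locS _ K huK
          · refine mem_locS.2 (Or.inr ?_)
            rw [par_insert G K hvK u] at h
            rw [par_localComp, hp, if_neg huK, add_zero, mul_one, par_comm_if G v u]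
            exact h
  · rw [show (¬par G K v = 1) ↔ par G K v ≠ 1 from Iff.rfl, zmod2_ne_one] at hp
    refine ⟨K, hK, ?_⟩
    intro u hu
    rcases mem_locS.1 hu with h | h
    · exact K_subset_locS _ K h
    · by_cases huK : u ∈ K
      · exact K_subset_locS _ K huK
      · refine mem_locS.2 (Or.inr ?_)
        rw [par_localComp, hp, if_neg huK, add_zero, mul_zero, add_zero]
        exact h

noncomputable def mval [Fintype V] (G : SimpleGraph V) : ℕ :=
  sInf {n | ∃ K : Finset V, K.Nonempty ∧ (locS G K).card = n}

lemma mval_set_nonempty [Fintype V] [Nonempty V] (G : SimpleGraph V) :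
    {n | ∃ K : Finset V, K.Nonempty ∧ (locS G K).card = n}.Nonempty := by
  obtain ⟨v⟩ := ‹Nonempty V›
  exact ⟨(locS G {v}).card, {v}, Finset.singleton_nonempty v, rfl⟩

lemma mval_le [Fintype V] {G : SimpleGraph V} {K : Finset V} (hK : K.Nonempty) :
    mval G ≤ (locS G K).card :=
  Nat.sInf_le ⟨K, hK, rfl⟩

lemma mval_attained [Fintype V] [Nonempty V] (G : SimpleGraph V) :
    ∃ K : Finset V, K.Nonempty ∧ (locS G K).card = mval G :=
  Nat.sInf_mem (mval_set_nonempty G)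

lemma mval_le_localComp [Fintype V] [Nonempty V] (G : SimpleGraph V) (v : V) :
    mval G ≤ mval (localComp G v) := by
  obtain ⟨K, hK, hcard⟩ := mval_attained (localComp G v)
  obtain ⟨Y, hY, hsub⟩ := locS_invar v hK
  calc mval G ≤ (locS G Y).card := mval_le hY
    _ ≤ (locS (localComp G v) K).card := Finset.card_le_card hsub
    _ = mval (localComp G v) := hcard

lemma mval_localComp [Fintype V] [Nonempty V] (G : SimpleGraph V) (v : V) :
    mval (localComp G v) = mval G := by
  refine le_antisymm ?_ (mval_le_localComp G v)
  have := mval_le_localComp (localComp G v) v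
  rwa [localComp_involutive] at this

lemma mval_foldl [Fintype V] [Nonempty V] (G : SimpleGraph V) (l : List V) :
    mval (l.foldl localComp G) = mval G := by
  induction l generalizing G with
  | nil => rfl
  | cons v l ih =>
    rw [List.foldl_cons, ih, mval_localComp]

lemma ncard_neighborSet (G : SimpleGraph V) [Fintype V] (v : V) :
    (G.neighborSet v).ncard = (Finset.univ.filter (fun u => G.Adj v u)).card := by
  rw [← Set.ncard_coe_finset]
  congr 1
  ext u
  simp [SimpleGraph.neighborSet]

lemma locS_singleton_card [Fintype V] (G : SimpleGraph V) (v : V) :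
    (locS G {v}).card = (G.neighborSet v).ncard + 1 := by
  have hpar : ∀ u, par G {v} u = if G.Adj u v then 1 else 0 := by
    intro u; unfold par; rw [Finset.sum_singleton]
  have hfil : Finset.univ.filter (fun u => par G {v} u = 1)
      = Finset.univ.filter (fun u => G.Adj v u) := by
    ext u
    simp only [Finset.mem_filter, Finset.mem_univ, true_and, hpar]
    constructor
    · intro h
      by_cases hA : G.Adj u v
      · exact (G.adj_comm u v).1 hA
      · rw [if_neg hA] at h
        exact absurd h (by decide)
    · intro h
      rw [if_pos ((G.adj_comm v u).1 h)]
  have hv : v ∉ Finset.univ.filter (fun u => G.Adj v u) := by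
    simp [G.irrefl]
  unfold locS
  rw [hfil]
  rw [← Finset.insert_eq, Finset.card_insert_of_notMem hv, ncard_neighborSet]

lemma minDegree_le' (G : SimpleGraph V) (v : V) :
    _root_.minDegree G ≤ (G.neighborSet v).ncard :=
  Nat.sInf_le ⟨v, rfl⟩

lemma minDegree_attained [Nonempty V] (G : SimpleGraph V) :
    ∃ v, (G.neighborSet v).ncard = _root_.minDegree G :=
  Nat.sInf_mem (Set.range_nonempty _)

lemma mval_le_minDegree [Fintype V] [Nonempty V] (G : SimpleGraph V) :
    mval G ≤ _root_.minDegree G + 1 := by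
  obtain ⟨v, hv⟩ := minDegree_attained G
  calc mval G ≤ (locS G {v}).card := mval_le (Finset.singleton_nonempty v)
    _ = (G.neighborSet v).ncard + 1 := locS_singleton_card G v
    _ = _root_.minDegree G + 1 := by rw [hv]

lemma shrink_package [Fintype V] {G : SimpleGraph V} {K : Finset V} {w : V}
    (hw : w ∈ K) (hp : par G K w = 1) :
    (K.erase w).Nonempty ∧ (K.erase w).card < K.card ∧
      locS (localComp G w) (K.erase w) ⊆ locS G K := by
  have hne : (K.erase w).Nonempty := by
    rcases Finset.eq_empty_or_nonempty (K.erase w) with he | hne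
    · exfalso
      have hKv : K = {w} := by
        apply Finset.eq_singleton_iff_nonempty_unique_mem.2 ⟨⟨w, hw⟩, ?_⟩
        intro x hx
        by_contra hxv
        exact (Finset.eq_empty_iff_forall_notMem.1 he x)
          (Finset.mem_erase.2 ⟨hxv, hx⟩)
      rw [hKv, par_self] at hp
      exact one_ne_zero hp.symm
    · exact hne
  exact ⟨hne, Finset.card_erase_lt_of_mem hw, locS_shrink hw hp⟩

lemma exists_foldl_minDegree [Fintype V] :
    ∀ (n : ℕ) (G : SimpleGraph V) (K : Finset V), K.Nonempty → K.card = n →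
      ∃ l : List V, _root_.minDegree (l.foldl localComp G) + 1 ≤ (locS G K).card := by
  intro n
  induction n using Nat.strong_induction_on with
  | _ n ih =>
    intro G K hK hcard
    by_cases hA : ∃ w ∈ K, par G K w = 1
    · -- Case A: a vertex of K sees K oddly; shrink.
      obtain ⟨w, hw, hp⟩ := hA
      obtain ⟨hne, hlt, hsub⟩ := shrink_package hw hp
      obtain ⟨l, hl⟩ := ih (K.erase w).card (hcard ▸ hlt) (localComp G w)
        (K.erase w) hne rfl
      refine ⟨w :: l, ?_⟩
      rw [List.foldl_cons]
      exact hl.trans (Finset.card_le_card hsub)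
    · push_neg at hA
      have hA0 : ∀ w ∈ K, par G K w = 0 := fun w hw => zmod2_ne_one.1 (hA w hw)
      by_cases hB : ∃ u ∈ K, ∃ w, G.Adj u w ∧ par G K w = 0
      · -- Case B1: some vertex of K has a neighbor seeing K evenly.
        obtain ⟨u, hu, w, hadj, hpw⟩ := hB
        set G1 := localComp G w with hG1
        have hsub1 : locS G1 K ⊆ locS G K := locS_even hpw
        have hpu : par G1 K u = 1 :=
          par_localComp_even hpw hu ((G.adj_comm u w).1 hadj) (hA0 u hu)
        obtain ⟨hne, hlt, hsub2⟩ := shrink_package hu hpu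
        obtain ⟨l, hl⟩ := ih (K.erase u).card (hcard ▸ hlt) (localComp G1 u)
          (K.erase u) hne rfl
        refine ⟨w :: u :: l, ?_⟩
        rw [List.foldl_cons, List.foldl_cons]
        exact hl.trans ((Finset.card_le_card hsub2).trans
          (Finset.card_le_card hsub1))
      · -- Case B2: all neighbors of K see K oddly; a vertex of K has small degree.
        push_neg at hB
        obtain ⟨u, hu⟩ := hK
        have hNsub : G.neighborSet u ⊆ ↑(locS G K \ K) := by
          intro x hx
          have hadj : G.Adj u x := hx
          have hpx : par G K x = 1 := by
            by_contra hc
            exact hB u hu x hadj (zmod2_ne_one.1 hc)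
          have hxK : x ∉ K := fun hxK =>
            one_ne_zero (hpx.symm.trans (hA0 x hxK))
          simp only [Finset.coe_sdiff, Set.mem_diff, Finset.mem_coe]
          exact ⟨mem_locS.2 (Or.inr hpx), hxK⟩
        have h1 : (G.neighborSet u).ncard ≤ (locS G K \ K).card := by
          have := Set.ncard_le_ncard hNsub (Set.toFinite _)
          rwa [Set.ncard_coe_finset] at this
        have h2 : (locS G K \ K).card + K.card = (locS G K).card :=
          Finset.card_sdiff_add_card_eq_card (K_subset_locS G K)
        have h3 : 1 ≤ K.card := Finset.card_pos.2 ⟨u, hu⟩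
        have h4 : _root_.minDegree G ≤ (G.neighborSet u).ncard := minDegree_le' G u
        exact ⟨[], by simp only [List.foldl_nil]; omega⟩

lemma even_iff_par [Fintype V] (G : SimpleGraph V) (F : Finset V) (u : V) :
    Even ((G.neighborSet u ∩ ↑F).ncard) ↔ par G F u = 0 := by
  have hco : ↑(F.filter (fun w => G.Adj u w)) = G.neighborSet u ∩ ↑F := by
    ext x
    simp [SimpleGraph.neighborSet, and_comm]
  have hcard : (G.neighborSet u ∩ ↑F).ncard = (F.filter (fun w => G.Adj u w)).card := by
    rw [← hco, Set.ncard_coe_finset]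
  rw [hcard]
  unfold par
  rw [Finset.sum_boole, ZMod.natCast_eq_zero_iff]
  exact even_iff_two_dvd

lemma outside_set_eq [Fintype V] (G : SimpleGraph V) (F : Finset V) :
    {v | v ∉ (↑F : Set V) ∧ Even ((G.neighborSet v ∩ ↑F).ncard)}
      = ↑((locS G F)ᶜ) := by
  ext v
  simp only [Set.mem_setOf_eq, Finset.coe_compl, Set.mem_compl_iff, Finset.mem_coe]
  rw [not_mem_locS, even_iff_par]

lemma outside_ncard [Fintype V] (G : SimpleGraph V) (F : Finset V) :
    {v | v ∉ (↑F : Set V) ∧ Even ((G.neighborSet v ∩ ↑F).ncard)}.ncard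
      = Fintype.card V - (locS G F).card := by
  rw [outside_set_eq, Set.ncard_coe_finset, Finset.card_compl]

lemma mval_pos [Fintype V] [Nonempty V] (G : SimpleGraph V) : 1 ≤ mval G := by
  obtain ⟨K, hK, hcard⟩ := mval_attained G
  calc 1 ≤ K.card := Finset.card_pos.2 hK
    _ ≤ (locS G K).card := Finset.card_le_card (K_subset_locS G K)
    _ = mval G := hcard

lemma mval_le_card [Fintype V] [Nonempty V] (G : SimpleGraph V) :
    mval G ≤ Fintype.card V := by
  obtain ⟨v⟩ := ‹Nonempty V›
  calc mval G ≤ (locS G {v}).card := mval_le (Finset.singleton_nonempty v)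
    _ ≤ Fintype.card V := Finset.card_le_univ _

lemma sSup_eq [Fintype V] [Nonempty V] (G : SimpleGraph V) :
    sSup {n | ∃ K : Set V, K.Nonempty ∧
        {v | v ∉ K ∧ Even ((G.neighborSet v ∩ K).ncard)}.ncard = n}
      = Fintype.card V - mval G := by
  set T := {n | ∃ K : Set V, K.Nonempty ∧
        {v | v ∉ K ∧ Even ((G.neighborSet v ∩ K).ncard)}.ncard = n} with hT
  have hmemT : ∀ n ∈ T, ∃ F : Finset V, F.Nonempty ∧
      n = Fintype.card V - (locS G F).card := by
    intro n hn
    obtain ⟨K, hK, hcard⟩ := hn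
    refine ⟨K.toFinset, ?_, ?_⟩
    · rwa [← Set.toFinset_nonempty] at hK
    · rw [← hcard, ← outside_ncard G K.toFinset, Set.coe_toFinset]
  have hbdd : BddAbove T := by
    refine ⟨Fintype.card V, fun n hn => ?_⟩
    obtain ⟨F, _, hn'⟩ := hmemT n hn
    omega
  apply le_antisymm
  · apply csSup_le
    · obtain ⟨v⟩ := ‹Nonempty V›
      exact ⟨_, {v}, Set.singleton_nonempty v, rfl⟩
    · intro n hn
      obtain ⟨F, hF, hn'⟩ := hmemT n hn
      have := mval_le (G := G) hF
      omega
  · apply le_csSup hbdd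
    obtain ⟨K, hK, hcard⟩ := mval_attained G
    refine ⟨↑K, by exact_mod_cast Finset.coe_nonempty.2 hK, ?_⟩
    rw [outside_ncard, hcard]

lemma minDegreeLoc_eq [Fintype V] [Nonempty V] (G : SimpleGraph V) :
    minDegreeLoc G = mval G - 1 := by
  apply le_antisymm
  · obtain ⟨K, hK, hcard⟩ := mval_attained G
    obtain ⟨l, hl⟩ := exists_foldl_minDegree K.card G K hK rfl
    have h : _root_.minDegree (l.foldl localComp G) ≤ mval G - 1 := by omega
    exact le_trans (Nat.sInf_le ⟨l, rfl⟩) h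
  · have hne : {n | ∃ l : List V, _root_.minDegree (l.foldl localComp G) = n}.Nonempty :=
      ⟨_root_.minDegree G, [], rfl⟩
    obtain ⟨l, hl⟩ := Nat.sInf_mem hne
    have h1 : mval (l.foldl localComp G) ≤ _root_.minDegree (l.foldl localComp G) + 1 :=
      mval_le_minDegree _
    rw [mval_foldl, hl] at h1
    unfold minDegreeLoc
    omega


/-- `δ_loc(G) = |V| - 1 - max_{∅ ≠ K ⊆ V} |{v ∈ V \ K :
|N_G(v) ∩ K| is even}|`. -/
theorem statement_7 [Fintype V] [Nonempty V] (G : SimpleGraph V) :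
    minDegreeLoc G = Fintype.card V - 1 -
      sSup {n | ∃ K : Set V, K.Nonempty ∧
        {v | v ∉ K ∧ Even ((G.neighborSet v ∩ K).ncard)}.ncard = n} := by
  rw [sSup_eq, minDegreeLoc_eq]
  have h1 := mval_pos G
  have h2 := mval_le_card G
  omega
end

section
/- Let G = (V, E) be a finite simple graph with δ(G) = δ_loc(G) = d, and let D ⊆ V with |D| = d. Then for every assignment σ : D → {0,1} there exists a set S ⊆ V \ D such that for every v ∈ D, |N_G(v) ∩ S| ≡ σ(v) (mod 2). (Equivalently, in Sutner's σ-game, where pressing a vertex flips the 0/1 values of all its neighbors, every configuration on D can be reached from the all-zero configuration by pressing only vertices outside D.) -/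
open SimpleGraph

variable {V : Type*}

noncomputable def npar (G : SimpleGraph V) (K : Set V) (u : V) : ZMod 2 :=
  ((G.neighborSet u ∩ K).ncard : ZMod 2)

open Classical in
lemma ncard_cast_eq_sum [Fintype V] (s : Set V) :
    ((s.ncard : ZMod 2)) = ∑ w : V, if w ∈ s then (1 : ZMod 2) else 0 := by
  rw [Set.ncard_eq_toFinset_card' s]
  simp only [← Set.mem_toFinset]
  rw [Finset.sum_ite_mem, Finset.univ_inter, Finset.card_eq_sum_ones]
  push_cast
  rfl

lemma localComp_adj_self (G : SimpleGraph V) (v u : V) :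
    (localComp G v).Adj u v ↔ G.Adj u v := by
  constructor
  · rintro ⟨hne, h⟩
    by_contra hadj
    exact h ⟨fun h' => absurd h' hadj, fun ⟨_, h'⟩ => absurd h' (G.loopless.irrefl v)⟩
  · intro h
    exact ⟨h.ne, fun hiff => (G.loopless.irrefl v) (hiff.mp h).2⟩

lemma localComp_neighborSet_of_not_adj (G : SimpleGraph V) {v u : V}
    (h : ¬ G.Adj v u) : (localComp G v).neighborSet u = G.neighborSet u := by
  ext w
  simp only [mem_neighborSet, localComp]
  constructor
  · rintro ⟨hne, hiff⟩
    by_contra huw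
    exact hiff ⟨fun h' => absurd h' huw, fun ⟨h', _⟩ => absurd h' h⟩
  · intro huw
    exact ⟨huw.ne, fun hiff => h (hiff.mp huw).1⟩

open Classical in
lemma masterC [Fintype V] (G : SimpleGraph V) {v u : V} (K : Set V)
    (h : ¬ G.Adj v u) : npar (localComp G v) K u = npar G K u := by
  rw [npar, npar, localComp_neighborSet_of_not_adj G h]

open Classical in
lemma masterAB [Fintype V] (G : SimpleGraph V) {v u : V} (K : Set V)
    (h : G.Adj v u) : npar (localComp G v) K u
      = npar G K u + npar G K v + (if u ∈ K then 1 else 0) := by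
  rw [npar, npar, npar, ncard_cast_eq_sum, ncard_cast_eq_sum, ncard_cast_eq_sum]
  have h1 : (if u ∈ K then (1:ZMod 2) else 0)
      = ∑ w : V, if w = u then (if w ∈ K then (1:ZMod 2) else 0) else 0 := by
    rw [Finset.sum_ite_eq' Finset.univ u (fun w => if w ∈ K then (1:ZMod 2) else 0)]
    simp
  rw [h1, ← Finset.sum_add_distrib, ← Finset.sum_add_distrib]
  refine Finset.sum_congr rfl fun w _ => ?_
  by_cases hK : w ∈ K
  · by_cases hwu : w = u
    · have h2 : ¬ (localComp G v).Adj u w := fun h' => h'.1 hwu.symm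
      have h3 : ¬ G.Adj u w := by rw [hwu]; exact G.loopless.irrefl u
      simp only [Set.mem_inter_iff, mem_neighborSet]
      rw [hwu] at hK ⊢
      simp [h2, hK, hwu, h3, G.loopless, h, hwu ▸ h]
      decide
    · by_cases huw : G.Adj u w <;> by_cases hvw : G.Adj v w <;>
        · simp only [Set.mem_inter_iff, mem_neighborSet, localComp]
          simp [hK, hwu, huw, hvw, h, Ne.symm hwu, adj_comm]
          try decide
  · have hwu : w = u → ¬ u ∈ K := by rintro rfl; exact hK
    by_cases hwu' : w = u
    · subst hwu'; simp [Set.mem_inter_iff, hK]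
    · simp [Set.mem_inter_iff, hK, hwu']

open Classical in
lemma npar_diff_singleton [Fintype V] (G : SimpleGraph V) {v : V} {K : Set V}
    (hv : v ∈ K) (u : V) :
    npar G (K \ {v}) u = npar G K u + (if G.Adj u v then 1 else 0) := by
  rw [npar, npar, ncard_cast_eq_sum, ncard_cast_eq_sum]
  have h1 : (if G.Adj u v then (1:ZMod 2) else 0)
      = ∑ w : V, if w = v then (if G.Adj u w then (1:ZMod 2) else 0) else 0 := by
    rw [Finset.sum_ite_eq' Finset.univ v (fun w => if G.Adj u w then (1:ZMod 2) else 0)]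
    simp
  rw [h1, ← Finset.sum_add_distrib]
  refine Finset.sum_congr rfl fun w _ => ?_
  by_cases hwv : w = v
  · rw [hwv]
    by_cases huv : G.Adj u v <;>
      simp [Set.mem_inter_iff, huv, hv] <;> decide
  · simp [Set.mem_inter_iff, hwv]

lemma zmod2_cases (x : ZMod 2) : x = 0 ∨ x = 1 := by
  fin_cases x
  · exact Or.inl rfl
  · exact Or.inr rfl

open Classical in
lemma stepA [Fintype V] (G' : SimpleGraph V) {K D : Set V} {v : V} (hKD : K ⊆ D)
    (hv : v ∈ K) (hodd : npar G' K v = 1)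
    (heven : ∀ u ∉ D, npar G' K u = 0) :
    (K \ {v}).Nonempty ∧ (∀ u ∉ D, npar (localComp G' v) (K \ {v}) u = 0) := by
  constructor
  · have hne : (G'.neighborSet v ∩ K).ncard ≠ 0 := by
      intro h0; rw [npar, h0] at hodd; exact absurd hodd (by decide)
    obtain ⟨w, hw⟩ := Set.nonempty_of_ncard_ne_zero hne
    exact ⟨w, hw.2, fun h => G'.loopless.irrefl v (h ▸ hw.1)⟩
  · intro u hu
    have huK : u ∉ K := fun h => hu (hKD h)
    rw [npar_diff_singleton (localComp G' v) hv u]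
    have hadj : (localComp G' v).Adj u v ↔ G'.Adj u v := localComp_adj_self G' v u
    by_cases hvu : G'.Adj v u
    · rw [masterAB G' K hvu, heven u hu, hodd, if_neg huK]
      have : G'.Adj u v := hvu.symm
      simp only [hadj, this, if_pos]
      decide
    · rw [masterC G' K hvu]
      have : ¬ G'.Adj u v := fun h => hvu h.symm
      simp [heven u hu, hadj, this]

lemma no_small_local_set [Fintype V] {D : Set V} {d : ℕ} (hDcard : D.ncard = d) :
    ∀ (n : ℕ) (K : Set V) (G' : SimpleGraph V), K.ncard ≤ n → K.Nonempty → K ⊆ D →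
    (∀ u ∉ D, npar G' K u = 0) →
    (∀ l : List V, d ≤ minDegree (l.foldl localComp G')) → False := by
  intro n
  induction n with
  | zero =>
    intro K G' hcard hne _ _ _
    rw [Nat.le_zero, Set.ncard_eq_zero K.toFinite] at hcard
    exact hne.ne_empty hcard
  | succ n ih =>
    intro K G' hcard hne hKD heven hl
    by_cases hA : ∃ v ∈ K, npar G' K v = 1
    · obtain ⟨v, hvK, hodd⟩ := hA
      obtain ⟨hne', heven'⟩ := stepA G' hKD hvK hodd heven
      refine ih (K \ {v}) (localComp G' v) ?_ hne' (Set.diff_subset.trans hKD) heven'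
        (fun l => hl (v :: l))
      have := Set.ncard_diff_singleton_lt_of_mem hvK K.toFinite
      omega
    · push_neg at hA
      have hA0 : ∀ v ∈ K, npar G' K v = 0 := fun v hv =>
        (zmod2_cases (npar G' K v)).resolve_right (hA v hv)
      by_cases hB : ∃ u v, G'.Adj u v ∧ v ∈ K ∧ npar G' K u = 0
      · obtain ⟨u, v, hadj, hvK, hu0⟩ := hB
        set G'' := localComp G' u with hG''
        have hvu : G'.Adj u v := hadj
        -- evenness preserved
        have heven'' : ∀ w ∉ D, npar G'' K w = 0 := by
          intro w hw
          by_cases h : G'.Adj u w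
          · rw [hG'', masterAB G' K h, heven w hw, hu0, if_neg (fun hm => hw (hKD hm))]
            decide
          · rw [hG'', masterC G' K h]; exact heven w hw
        have hodd'' : npar G'' K v = 1 := by
          rw [hG'', masterAB G' K hvu, hA0 v hvK, hu0, if_pos hvK]
          decide
        obtain ⟨hne', heven'⟩ := stepA G'' hKD hvK hodd'' heven''
        refine ih (K \ {v}) (localComp G'' v) ?_ hne' (Set.diff_subset.trans hKD) heven'
          (fun l => hl (u :: v :: l))
        have := Set.ncard_diff_singleton_lt_of_mem hvK K.toFinite
        omega
      · push_neg at hB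
        obtain ⟨v, hvK⟩ := hne
        have hNsub : G'.neighborSet v ⊆ D := by
          intro w hw
          by_contra hwD
          exact hB w v (G'.adj_symm hw) hvK (heven w hwD)
        have hlt : (G'.neighborSet v).ncard < D.ncard := by
          refine Set.ncard_lt_ncard ⟨hNsub, fun hsub => ?_⟩ D.toFinite
          exact G'.loopless.irrefl v (hsub (hKD hvK))
        have h1 : minDegree G' ≤ (G'.neighborSet v).ncard := Nat.sInf_le ⟨v, rfl⟩
        have h2 : d ≤ minDegree G' := by simpa using hl []
        omega

open Classical in
lemma npar_eq_sum_subtype [Fintype V] (G : SimpleGraph V) (A : Set V) [Fintype ↥A]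
    (S : Set V) (hS : S ⊆ A) (u : V) :
    ((G.neighborSet u ∩ S).ncard : ZMod 2)
      = ∑ v : A, (if G.Adj u ↑v then (1:ZMod 2) else 0) * (if ↑v ∈ S then 1 else 0) := by
  rw [ncard_cast_eq_sum]
  rw [← Finset.sum_subtype A.toFinset (fun x => Set.mem_toFinset)
    (fun w => (if G.Adj u w then (1:ZMod 2) else 0) * (if w ∈ S then 1 else 0))]
  rw [← Finset.sum_subset (Finset.subset_univ A.toFinset)]
  · refine Finset.sum_congr rfl fun w _ => ?_
    by_cases h1 : G.Adj u w <;> by_cases h2 : w ∈ S <;>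
      simp [Set.mem_inter_iff, h1, h2]
  · intro w _ hw
    rw [Set.mem_toFinset] at hw
    have : w ∉ S := fun h => hw (hS h)
    simp [this]

/-- If `δ(G) = δ_loc(G) = d` and `|D| = d`, then every 0/1
assignment on `D` can be realized as the parity vector of `|N_G(v) ∩ S|`
for some set `S` of vertices outside `D`. -/
theorem statement_8 [Fintype V] (G : SimpleGraph V) (d : ℕ)
    (h1 : minDegree G = d) (h2 : minDegreeLoc G = d)
    (D : Set V) (hD : D.ncard = d) (sigma : D → ZMod 2) :
    ∃ S : Set V, S ⊆ Dᶜ ∧ ∀ v, (hv : v ∈ D) →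
      ((G.neighborSet v ∩ S).ncard : ZMod 2) = sigma ⟨v, hv⟩ := by
  classical
  have hl : ∀ l : List V, d ≤ _root_.minDegree (l.foldl localComp G) := by
    intro l
    rw [← h2]
    exact Nat.sInf_le ⟨l, rfl⟩
  set M : Matrix D ↥(Dᶜ) (ZMod 2) :=
    fun v u => if G.Adj ↑v ↑u then 1 else 0 with hM
  have hinj : Function.Injective M.transpose.mulVecLin := by
    rw [injective_iff_map_eq_zero]
    intro y hy
    by_contra hy0
    have hex : ∃ v : D, y v = 1 := by
      by_contra hne
      push_neg at hne
      refine hy0 (funext fun v => ?_)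
      exact (zmod2_cases (y v)).resolve_right (hne v)
    obtain ⟨v0, hv0⟩ := hex
    set K : Set V := {w : V | ∃ h : w ∈ D, y ⟨w, h⟩ = 1} with hK
    have hKD : K ⊆ D := fun w hw => hw.1
    have hKne : K.Nonempty := ⟨v0, v0.2, by rw [Subtype.coe_eta]; exact hv0⟩
    have hyK : ∀ v : D, y v = if (v : V) ∈ K then 1 else 0 := by
      intro v
      by_cases h : (v : V) ∈ K
      · rw [if_pos h]
        obtain ⟨hmem, hval⟩ := h
        rw [Subtype.coe_eta] at hval
        exact hval
      · rw [if_neg h]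
        rcases zmod2_cases (y v) with h0 | h1
        · exact h0
        · exact absurd ⟨v.2, by rw [Subtype.coe_eta]; exact h1⟩ h
    have heven : ∀ u ∉ D, npar G K u = 0 := by
      intro u hu
      have := congrFun hy ⟨u, hu⟩
      rw [npar, npar_eq_sum_subtype G D K hKD u]
      rw [show (0:ZMod 2) = M.transpose.mulVecLin y ⟨u, hu⟩ from (congrFun hy ⟨u, hu⟩).symm]
      rw [Matrix.mulVecLin_apply, Matrix.mulVec, dotProduct]
      refine Finset.sum_congr rfl fun v _ => ?_
      rw [hyK v, Matrix.transpose_apply, hM]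
      congr 2
      exact propext (G.adj_comm u v).symm ▸ rfl
    exact no_small_local_set hD K.ncard K G le_rfl hKne hKD heven hl
  have hsurj : Function.Surjective M.mulVecLin := by
    have hr1 : M.transpose.rank = Fintype.card D := by
      rw [Matrix.rank, LinearMap.finrank_range_of_inj hinj, Module.finrank_pi]
    have hr2 : M.rank = Fintype.card D := by rw [← Matrix.rank_transpose, hr1]
    rw [← LinearMap.range_eq_top]
    apply Submodule.eq_top_of_finrank_eq
    rw [← Matrix.rank, hr2, Module.finrank_pi]
  obtain ⟨x, hx⟩ := hsurj (fun v => sigma ⟨v.1, v.2⟩)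
  refine ⟨{u : V | ∃ h : u ∈ Dᶜ, x ⟨u, h⟩ = 1}, fun u hu => hu.1, ?_⟩
  intro v hv
  set S : Set V := {u : V | ∃ h : u ∈ Dᶜ, x ⟨u, h⟩ = 1} with hS
  have hxS : ∀ u : ↥(Dᶜ), x u = if (u : V) ∈ S then 1 else 0 := by
    intro u
    by_cases h : (u : V) ∈ S
    · rw [if_pos h]
      obtain ⟨hmem, hval⟩ := h
      rw [Subtype.coe_eta] at hval
      exact hval
    · rw [if_neg h]
      rcases zmod2_cases (x u) with h0 | h1
      · exact h0
      · exact absurd ⟨u.2, by rw [Subtype.coe_eta]; exact h1⟩ h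
  rw [npar_eq_sum_subtype G Dᶜ S (fun u hu => hu.1) v]
  have := congrFun hx ⟨v, hv⟩
  rw [Matrix.mulVecLin_apply, Matrix.mulVec, dotProduct] at this
  rw [← this]
  refine Finset.sum_congr (by congr 1) fun u _ => by
    rw [hxS u]; congr 1; exact ite_congr rfl (fun _ => rfl) (fun _ => rfl)
end
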